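/- Define for μ ∈ M and T ≥ 1 the quantity S_{T,μ} = ∑_{t=1}^{T} (∑_{ν∈M_l} J_{T,t+1,μ,ν})². Then: (a) for every μ ∈ M_l^c and every T ≥ K, S_{T,μ} ≥ (T − K + 1) · α^{2(K−1)}, and in particular lim_{T→∞} S_{T,μ} = ∞; (b) for every μ ∈ M ∖ M_l^c, sup_{T≥1} S_{T,μ} < ∞. Thus the divergence of S_{T,μ} is determined exactly by whether μ belongs to M_l^c. -/

import Mathlib

open Matrix Finset Filter

noncomputable section

/-- In-neighbourhood of `μ` in the directed graph with edge set `E`. -/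
def Nin {K : ℕ} (E : Finset (Fin K × Fin K)) (μ : Fin K) : Finset (Fin K) :=
  Finset.univ.filter (fun ν => (ν, μ) ∈ E)

/-- The set of learning models (those with at least one incoming edge). -/
def Ml {K : ℕ} (E : Finset (Fin K × Fin K)) : Finset (Fin K) :=
  Finset.univ.filter (fun μ => Nin E μ ≠ ∅)

/-- The set of models with no incoming edge (stable data sources). -/
def Mu {K : ℕ} (E : Finset (Fin K × Fin K)) : Finset (Fin K) :=
  Finset.univ.filter (fun μ => Nin E μ = ∅)

/-- The edge relation: `EdgeRel E a b` iff `(a, b) ∈ E`. -/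
def EdgeRel {K : ℕ} (E : Finset (Fin K × Fin K)) : Fin K → Fin K → Prop :=
  fun a b => (a, b) ∈ E

open Classical in
/-- Models in `M_l` not reachable by a directed path from any node of `M_u`. -/
def MlInf {K : ℕ} (E : Finset (Fin K × Fin K)) : Finset (Fin K) :=
  (Ml E).filter (fun μ => ∀ ν ∈ Mu E, ¬ Relation.TransGen (EdgeRel E) ν μ)

open Classical in
/-- Models in `M_l^∞` together with models reachable from some node of `M_l^∞`. -/
def Mlc {K : ℕ} (E : Finset (Fin K × Fin K)) : Finset (Fin K) :=
  (Ml E).filter (fun μ => μ ∈ MlInf E ∨ ∃ ν ∈ MlInf E, Relation.TransGen (EdgeRel E) ν μ)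

/-- The non-collapsing learning models. -/
def Mlnc {K : ℕ} (E : Finset (Fin K × Fin K)) : Finset (Fin K) := Ml E \ Mlc E

/-- `Jmat P t s = P_t P_{t−1} ⋯ P_s` (equal to `I` when `s = t + 1`). -/
def Jmat {K : ℕ} (P : ℕ → Matrix (Fin K) (Fin K) ℝ) (t s : ℕ) : Matrix (Fin K) (Fin K) ℝ :=
  ((List.range' s (t + 1 - s)).reverse.map P).prod

/-- The `E`-paths `v_1 → ⋯ → v_x → μ` of length `x` ending at `μ`, encoded as a function
`v : Fin (x+1) → Fin K` with `v x = μ` and `(v i, v (i+1)) ∈ E` for all `i < x`. -/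
def pathsTo {K : ℕ} (E : Finset (Fin K × Fin K)) (x : ℕ) (μ : Fin K) :
    Finset (Fin (x + 1) → Fin K) :=
  Finset.univ.filter (fun v => v (Fin.last x) = μ ∧ ∀ i : Fin x, (v i.castSucc, v i.succ) ∈ E)

end

section Aux

variable {K : ℕ} (E : Finset (Fin K × Fin K)) (P : ℕ → Matrix (Fin K) (Fin K) ℝ)

/-- `Hm P s x = P_{s+x} ⋯ P_{s+1}`. -/
noncomputable def Hm (s x : ℕ) : Matrix (Fin K) (Fin K) ℝ := Jmat P (s + x) (s + 1)

lemma Hm_zero (s : ℕ) : Hm P s 0 = 1 := by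
  simp [Hm, Jmat]

lemma Hm_succ (s x : ℕ) : Hm P s (x + 1) = P (s + x + 1) * Hm P s x := by
  have h1 : s + (x + 1) + 1 - (s + 1) = x + 1 := by omega
  have h2 : s + x + 1 - (s + 1) = x := by omega
  have h3 : s + 1 + x = s + x + 1 := by omega
  simp only [Hm, Jmat, h1, h2, List.range'_1_concat, List.reverse_append, List.map_append,
    List.prod_append, List.reverse_cons, List.map_cons, List.prod_cons, List.reverse_nil,
    List.map_nil, List.prod_nil, h3]
  simp

lemma Hm_add (s x y : ℕ) : Hm P s (x + y) = Hm P (s + y) x * Hm P s y := by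
  induction x with
  | zero => simp [Hm_zero]
  | succ x ih =>
      have : x + 1 + y = (x + y) + 1 := by omega
      rw [this, Hm_succ, ih, Hm_succ, ← Matrix.mul_assoc]
      have h4 : s + y + x + 1 = s + (x + y) + 1 := by omega
      rw [h4]

end Aux

section Main

variable {K : ℕ} {E : Finset (Fin K × Fin K)} {α : ℝ} {P : ℕ → Matrix (Fin K) (Fin K) ℝ}

lemma mem_Mu_iff {μ : Fin K} : μ ∈ Mu E ↔ Nin E μ = ∅ := by simp [Mu]

lemma mem_Ml_iff {μ : Fin K} : μ ∈ Ml E ↔ Nin E μ ≠ ∅ := by simp [Ml]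

lemma Ml_or_Mu (μ : Fin K) : μ ∈ Ml E ∨ μ ∈ Mu E := by
  by_cases h : Nin E μ = ∅
  · exact Or.inr (mem_Mu_iff.2 h)
  · exact Or.inl (mem_Ml_iff.2 h)

lemma not_Ml_and_Mu {μ : Fin K} (h1 : μ ∈ Ml E) (h2 : μ ∈ Mu E) : False :=
  (mem_Ml_iff.1 h1) (mem_Mu_iff.1 h2)

lemma not_Ml_iff_Mu {μ : Fin K} : μ ∉ Ml E ↔ μ ∈ Mu E := by
  constructor
  · intro h; rcases Ml_or_Mu (E := E) μ with h'|h' <;> tauto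
  · intro h h'; exact not_Ml_and_Mu h' h

lemma Ml_of_edge {ν μ : Fin K} (h : (ν, μ) ∈ E) : μ ∈ Ml E := by
  rw [mem_Ml_iff]
  intro hemp
  have : ν ∈ Nin E μ := by simp [Nin, h]
  simp [hemp] at this

section withP
variable
    (hPzero : ∀ t, 1 ≤ t → ∀ μ ν : Fin K,
      ¬ ((μ ∈ Ml E ∧ ν ∈ Nin E μ) ∨ (μ = ν ∧ μ ∈ Mu E)) → P t μ ν = 0)
    (hPnn : ∀ t, 1 ≤ t → ∀ μ ν : Fin K, 0 ≤ P t μ ν)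
    (hPu : ∀ t, 1 ≤ t → ∀ μ ∈ Mu E, P t μ μ = 1)
    (hProw : ∀ t, 1 ≤ t → ∀ μ ∈ Ml E, ∑ ν ∈ Nin E μ, P t μ ν = 1)

include hPzero hProw hPu in
lemma Prow1 {t : ℕ} (ht : 1 ≤ t) (μ : Fin K) : ∑ ν, P t μ ν = 1 := by
  rcases Ml_or_Mu (E := E) μ with h | h
  · rw [← hProw t ht μ h]
    apply (Finset.sum_subset (Finset.subset_univ _) _).symm
    intro ν _ hν
    apply hPzero t ht
    push_neg
    refine ⟨fun _ => hν, fun _ h' => absurd h' (by simpa using fun hh => not_Ml_and_Mu h hh)⟩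
  · rw [Finset.sum_eq_single μ]
    · exact hPu t ht μ h
    · intro ν _ hν
      apply hPzero t ht
      push_neg
      exact ⟨fun hl => absurd hl (by simpa using fun hh => not_Ml_and_Mu hh h),
        fun he => absurd he.symm hν⟩
    · simp

include hPnn in
lemma Hm_nonneg {s : ℕ} (hs : 1 ≤ s) (x : ℕ) (μ ν : Fin K) : 0 ≤ Hm P s x μ ν := by
  induction x generalizing μ ν with
  | zero => rw [Hm_zero]; by_cases h : μ = ν <;> simp [Matrix.one_apply, h]
  | succ x ih =>
      rw [Hm_succ, Matrix.mul_apply]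
      exact Finset.sum_nonneg fun κ _ => mul_nonneg (hPnn _ (by omega) _ _) (ih _ _)

include hPzero hProw hPu in
lemma Hm_row {s : ℕ} (hs : 1 ≤ s) (x : ℕ) (μ : Fin K) : ∑ ν, Hm P s x μ ν = 1 := by
  induction x generalizing μ with
  | zero => rw [Hm_zero]; simp [Matrix.one_apply]
  | succ x ih =>
      rw [Hm_succ]
      simp only [Matrix.mul_apply]
      rw [Finset.sum_comm]
      calc ∑ κ, ∑ ν, P (s + x + 1) μ κ * Hm P s x κ ν
          = ∑ κ, P (s + x + 1) μ κ * ∑ ν, Hm P s x κ ν := by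
            simp [Finset.mul_sum]
        _ = ∑ κ, P (s + x + 1) μ κ := by
            refine Finset.sum_congr rfl fun κ _ => ?_
            rw [ih κ, mul_one]
        _ = 1 := Prow1 hPzero hPu hProw (by omega) μ



end withP

noncomputable def gfun (E : Finset (Fin K × Fin K)) (P : ℕ → Matrix (Fin K) (Fin K) ℝ)
    (s x : ℕ) (μ : Fin K) : ℝ := ∑ ν ∈ Ml E, Hm P s x μ ν

noncomputable def ufun (E : Finset (Fin K × Fin K)) (P : ℕ → Matrix (Fin K) (Fin K) ℝ)
    (s x : ℕ) (μ : Fin K) : ℝ := ∑ ν ∈ Mu E, Hm P s x μ ν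

lemma Ml_union_Mu : Ml E ∪ Mu E = Finset.univ := by
  ext μ; simpa using Ml_or_Mu μ

lemma Ml_disj_Mu : Disjoint (Ml E) (Mu E) :=
  Finset.disjoint_left.2 fun μ h1 h2 => not_Ml_and_Mu h1 h2

section withP
variable
    (hPzero : ∀ t, 1 ≤ t → ∀ μ ν : Fin K,
      ¬ ((μ ∈ Ml E ∧ ν ∈ Nin E μ) ∨ (μ = ν ∧ μ ∈ Mu E)) → P t μ ν = 0)
    (hPnn : ∀ t, 1 ≤ t → ∀ μ ν : Fin K, 0 ≤ P t μ ν)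
    (hPu : ∀ t, 1 ≤ t → ∀ μ ∈ Mu E, P t μ μ = 1)
    (hProw : ∀ t, 1 ≤ t → ∀ μ ∈ Ml E, ∑ ν ∈ Nin E μ, P t μ ν = 1)

include hPzero hPu hProw in
lemma g_add_u {s : ℕ} (hs : 1 ≤ s) (x : ℕ) (μ : Fin K) :
    gfun E P s x μ + ufun E P s x μ = 1 := by
  rw [gfun, ufun, ← Finset.sum_union Ml_disj_Mu, Ml_union_Mu]
  exact Hm_row hPzero hPu hProw hs x μ

include hPnn in
lemma g_nonneg {s : ℕ} (hs : 1 ≤ s) (x : ℕ) (μ : Fin K) : 0 ≤ gfun E P s x μ :=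
  Finset.sum_nonneg fun ν _ => Hm_nonneg hPnn hs x μ ν

include hPnn in
lemma u_nonneg {s : ℕ} (hs : 1 ≤ s) (x : ℕ) (μ : Fin K) : 0 ≤ ufun E P s x μ :=
  Finset.sum_nonneg fun ν _ => Hm_nonneg hPnn hs x μ ν

include hPzero hPnn hPu hProw in
lemma g_le_one {s : ℕ} (hs : 1 ≤ s) (x : ℕ) (μ : Fin K) : gfun E P s x μ ≤ 1 := by
  have := g_add_u hPzero hPu hProw hs x μ
  have := u_nonneg (E := E) hPnn hs x μ
  linarith

lemma g_zero (s : ℕ) (μ : Fin K) :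
    gfun E P s 0 μ = if μ ∈ Ml E then 1 else 0 := by
  rw [gfun, Hm_zero]
  simp [Matrix.one_apply, Finset.sum_ite_eq]

lemma g_succ (s x : ℕ) (μ : Fin K) :
    gfun E P s (x + 1) μ = ∑ κ, P (s + x + 1) μ κ * gfun E P s x κ := by
  simp only [gfun, Hm_succ, Matrix.mul_apply]
  rw [Finset.sum_comm]
  simp [Finset.mul_sum]

lemma u_succ (s x : ℕ) (μ : Fin K) :
    ufun E P s (x + 1) μ = ∑ κ, P (s + x + 1) μ κ * ufun E P s x κ := by
  simp only [ufun, Hm_succ, Matrix.mul_apply]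
  rw [Finset.sum_comm]
  simp [Finset.mul_sum]

include hPzero hPu in
lemma g_Mu {s : ℕ} (hs : 1 ≤ s) (x : ℕ) {μ : Fin K} (hμ : μ ∈ Mu E) :
    gfun E P s x μ = 0 := by
  induction x with
  | zero => rw [g_zero]; simp [not_Ml_iff_Mu.2 hμ]
  | succ x ih =>
      rw [g_succ]
      refine Finset.sum_eq_zero fun κ _ => ?_
      by_cases hκ : κ = μ
      · rw [hκ, ih, mul_zero]
      · rw [hPzero _ (by omega) μ κ ?_, zero_mul]
        push_neg
        exact ⟨fun h => (not_Ml_and_Mu h hμ).elim, fun h => absurd h.symm hκ⟩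

end withP

lemma mem_MlInf_iff {μ : Fin K} :
    μ ∈ MlInf E ↔ μ ∈ Ml E ∧ ∀ ν ∈ Mu E, ¬ Relation.TransGen (EdgeRel E) ν μ := by
  classical
  simp [MlInf]

lemma mem_Mlc_iff {μ : Fin K} :
    μ ∈ Mlc E ↔ μ ∈ Ml E ∧ (μ ∈ MlInf E ∨
      ∃ ν ∈ MlInf E, Relation.TransGen (EdgeRel E) ν μ) := by
  classical
  simp [Mlc]

lemma Nin_subset_MlInf {μ : Fin K} (hμ : μ ∈ MlInf E) {ν : Fin K} (hν : ν ∈ Nin E μ) :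
    ν ∈ MlInf E := by
  rw [mem_MlInf_iff] at hμ ⊢
  have hedge : (ν, μ) ∈ E := by simpa [Nin] using hν
  constructor
  · rw [mem_Ml_iff]
    intro hemp
    exact hμ.2 ν (mem_Mu_iff.2 hemp) (Relation.TransGen.single hedge)
  · intro u hu htrans
    exact hμ.2 u hu (htrans.tail hedge)

/-- Generic stabilisation of monotone layered families. -/
lemma layer_stab (hK : 1 ≤ K) (Φ : Finset (Fin K) → Finset (Fin K)) (A : ℕ → Finset (Fin K))
    (hA : ∀ n, A (n + 1) = A n ∪ Φ (A n)) (h0 : (A 0).Nonempty) :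
    ∀ n, A n ⊆ A (K - 1) := by
  have mono : ∀ n, A n ⊆ A (n + 1) := fun n => by rw [hA]; exact Finset.subset_union_left
  have mono' : Monotone A := monotone_nat_of_le_succ mono
  have exj : ∃ j ≤ K - 1, A (j + 1) = A j := by
    by_contra hno
    push_neg at hno
    have grow : ∀ j ≤ K, j + (A 0).card ≤ (A j).card := by
      intro j hj
      induction j with
      | zero => simp
      | succ j ih =>
          have h1 : j ≤ K := by omega
          have h2 : j ≤ K - 1 := by omega
          have hne := hno j h2
          have : A j ⊂ A (j + 1) := (Finset.ssubset_iff_of_subset (mono j)).2 (by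
            rcases Finset.exists_of_ssubset (lt_of_le_of_ne (mono j) (Ne.symm hne)) with ⟨x, hx1, hx2⟩
            exact ⟨x, hx1, hx2⟩)
          have := Finset.card_lt_card this
          omega
    have hK1 : (A 0).card ≥ 1 := Finset.card_pos.2 h0
    have := grow K le_rfl
    have hcard : (A K).card ≤ K := le_trans (Finset.card_le_univ _) (by simp)
    omega
  obtain ⟨j, hjle, hfix⟩ := exj
  have eqj : ∀ n, j ≤ n → A n = A j := by
    intro n hn
    induction n with
    | zero => have : j = 0 := by omega
              rw [this]
    | succ n ih =>
        rcases Nat.lt_or_ge j (n + 1) with h | h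
        · have hjn : j ≤ n := by omega
          rw [hA, ih hjn, ← hA, hfix]
        · have : j = n + 1 := by omega
          rw [this]
  intro n
  rcases le_or_gt n (K - 1) with h | h
  · exact mono' h
  · rw [eqj n (by omega)]
    exact mono' hjle

open Classical in
/-- Layers of nodes reachable from `MlInf` (forward along edges). -/
noncomputable def Aset (E : Finset (Fin K × Fin K)) : ℕ → Finset (Fin K)
  | 0 => MlInf E
  | n + 1 => Aset E n ∪ ((Ml E).filter (fun μ => ∃ ν ∈ Aset E n, (ν, μ) ∈ E))

lemma Aset_subset_Ml : ∀ n, Aset E n ⊆ Ml E := by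
  intro n
  induction n with
  | zero => exact fun μ hμ => (mem_MlInf_iff.1 hμ).1
  | succ n ih =>
      intro μ hμ
      rcases Finset.mem_union.1 hμ with h | h
      · exact ih h
      · exact (Finset.mem_filter.1 h).1

lemma Aset_reach {ν μ : Fin K} (hν : ν ∈ MlInf E)
    (h : Relation.TransGen (EdgeRel E) ν μ) : ∃ n, μ ∈ Aset E n := by
  classical
  induction h with
  | single h =>
      refine ⟨1, Finset.mem_union.2 (Or.inr (Finset.mem_filter.2 ⟨Ml_of_edge h, ν, hν, h⟩))⟩
  | tail hab h ih =>
      obtain ⟨n, hb⟩ := ih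
      exact ⟨n + 1, Finset.mem_union.2 (Or.inr (Finset.mem_filter.2 ⟨Ml_of_edge h, _, hb, h⟩))⟩

lemma Mlc_subset_Aset (hK : 1 ≤ K) {μ : Fin K} (hμ : μ ∈ Mlc E) : μ ∈ Aset E (K - 1) := by
  rw [mem_Mlc_iff] at hμ
  have hinf : (MlInf E).Nonempty := by
    rcases hμ.2 with h | ⟨ν, hν, _⟩
    · exact ⟨μ, h⟩
    · exact ⟨ν, hν⟩
  classical
  have := layer_stab hK (fun A => (Ml E).filter (fun μ => ∃ ν ∈ A, (ν, μ) ∈ E)) (Aset E)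
    (fun n => rfl) hinf
  rcases hμ.2 with h | ⟨ν, hν, htr⟩
  · exact this 0 h
  · obtain ⟨n, hn⟩ := Aset_reach hν htr
    exact this n hn

section withP2
variable {α : ℝ}
variable
    (hα0 : 0 < α) (hα1 : α < 1)
    (hPzero : ∀ t, 1 ≤ t → ∀ μ ν : Fin K,
      ¬ ((μ ∈ Ml E ∧ ν ∈ Nin E μ) ∨ (μ = ν ∧ μ ∈ Mu E)) → P t μ ν = 0)
    (hPnn : ∀ t, 1 ≤ t → ∀ μ ν : Fin K, 0 ≤ P t μ ν)
    (hPu : ∀ t, 1 ≤ t → ∀ μ ∈ Mu E, P t μ μ = 1)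
    (hProw : ∀ t, 1 ≤ t → ∀ μ ∈ Ml E, ∑ ν ∈ Nin E μ, P t μ ν = 1)
    (hPα : ∀ t, 1 ≤ t → ∀ ν μ : Fin K, (ν, μ) ∈ E → α ≤ P t μ ν)

include hPzero hPu hProw in
lemma g_MlInf {s : ℕ} (hs : 1 ≤ s) (x : ℕ) {μ : Fin K} (hμ : μ ∈ MlInf E) :
    gfun E P s x μ = 1 := by
  induction x generalizing μ with
  | zero => rw [g_zero]; simp [(mem_MlInf_iff.1 hμ).1]
  | succ x ih =>
      rw [g_succ]
      have hMl := (mem_MlInf_iff.1 hμ).1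
      have : ∀ κ : Fin K, P (s + x + 1) μ κ * gfun E P s x κ = P (s + x + 1) μ κ := by
        intro κ
        by_cases hκ : κ ∈ Nin E μ
        · rw [ih (Nin_subset_MlInf hμ hκ), mul_one]
        · rw [hPzero _ (by omega) μ κ ?_, zero_mul]
          push_neg
          exact ⟨fun _ => hκ, fun _ h => (not_Ml_and_Mu hMl h).elim⟩
      rw [Finset.sum_congr rfl (fun κ _ => this κ)]
      exact Prow1 hPzero hPu hProw (by omega) μ

include hα0 hα1 hPzero hPnn hPu hProw hPα in
lemma g_Aset {s : ℕ} (hs : 1 ≤ s) :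
    ∀ n x (μ : Fin K), μ ∈ Aset E n → α ^ (min x n) ≤ gfun E P s x μ := by
  intro n
  induction n with
  | zero =>
      intro x μ hμ
      rw [g_MlInf hPzero hPu hProw hs x hμ]
      simpa using pow_le_one₀ hα0.le hα1.le
  | succ n ih =>
      intro x μ hμ
      rcases Finset.mem_union.1 hμ with h | h
      · calc α ^ (min x (n + 1)) ≤ α ^ (min x n) :=
              pow_le_pow_of_le_one hα0.le hα1.le (by omega)
          _ ≤ gfun E P s x μ := ih x μ h
      · obtain ⟨hMl, ν, hν, hedge⟩ := Finset.mem_filter.1 h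
        cases x with
        | zero => rw [g_zero]; simp [hMl]
        | succ x =>
            rw [g_succ]
            have hterm : α ^ (min (x + 1) (n + 1)) ≤ P (s + x + 1) μ ν * gfun E P s x ν := by
              have h1 : α ≤ P (s + x + 1) μ ν := hPα _ (by omega) ν μ hedge
              have h2 : α ^ (min x n) ≤ gfun E P s x ν := ih x ν hν
              have hmin : min (x + 1) (n + 1) = min x n + 1 := by omega
              rw [hmin, pow_succ, mul_comm]
              exact mul_le_mul h1 h2 (pow_nonneg hα0.le _) (le_trans hα0.le h1)
            refine le_trans hterm (Finset.single_le_sum (f := fun κ =>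
              P (s + x + 1) μ κ * gfun E P s x κ) ?_ (Finset.mem_univ ν))
            intro κ _
            exact mul_nonneg (hPnn _ (by omega) _ _) (g_nonneg hPnn hs x κ)

include hα0 hα1 hPzero hPnn hPu hProw hPα in
lemma g_Mlc (hK : 1 ≤ K) {s : ℕ} (hs : 1 ≤ s) (x : ℕ) {μ : Fin K} (hμ : μ ∈ Mlc E) :
    α ^ (K - 1) ≤ gfun E P s x μ := by
  have h := g_Aset hα0 hα1 hPzero hPnn hPu hProw hPα hs (K - 1) x μ (Mlc_subset_Aset hK hμ)
  calc α ^ (K - 1) ≤ α ^ (min x (K - 1)) :=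
        pow_le_pow_of_le_one hα0.le hα1.le (by omega)
    _ ≤ _ := h

end withP2

open Classical in
/-- Layers of nodes reachable from `Mu` (forward along edges). -/
noncomputable def Dset (E : Finset (Fin K × Fin K)) : ℕ → Finset (Fin K)
  | 0 => Mu E
  | n + 1 => Dset E n ∪ (Finset.univ.filter (fun μ => ∃ ν ∈ Dset E n, (ν, μ) ∈ E))

lemma Dset_reach {u μ : Fin K} (hu : u ∈ Mu E)
    (h : Relation.TransGen (EdgeRel E) u μ) : ∃ n, μ ∈ Dset E n := by
  classical
  induction h with
  | single h =>
      refine ⟨1, Finset.mem_union.2 (Or.inr ?_)⟩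
      simp only [Finset.mem_filter, Finset.mem_univ, true_and]
      exact ⟨u, hu, h⟩
  | tail hab h ih =>
      obtain ⟨n, hb⟩ := ih
      refine ⟨n + 1, Finset.mem_union.2 (Or.inr ?_)⟩
      simp only [Finset.mem_filter, Finset.mem_univ, true_and]
      exact ⟨_, hb, h⟩

lemma not_MlInf_Dset (hK : 1 ≤ K) {μ : Fin K} (hMl : μ ∈ Ml E) (hninf : μ ∉ MlInf E) :
    μ ∈ Dset E (K - 1) := by
  classical
  have : ∃ u ∈ Mu E, Relation.TransGen (EdgeRel E) u μ := by
    rw [mem_MlInf_iff] at hninf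
    push_neg at hninf
    exact hninf hMl
  obtain ⟨u, hu, htr⟩ := this
  obtain ⟨n, hn⟩ := Dset_reach hu htr
  exact layer_stab hK (fun A => Finset.univ.filter (fun μ => ∃ ν ∈ A, (ν, μ) ∈ E)) (Dset E)
    (fun n => rfl) ⟨u, hu⟩ n hn

section withP3
variable {α : ℝ}
variable
    (hα0 : 0 < α) (hα1 : α < 1)
    (hPzero : ∀ t, 1 ≤ t → ∀ μ ν : Fin K,
      ¬ ((μ ∈ Ml E ∧ ν ∈ Nin E μ) ∨ (μ = ν ∧ μ ∈ Mu E)) → P t μ ν = 0)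
    (hPnn : ∀ t, 1 ≤ t → ∀ μ ν : Fin K, 0 ≤ P t μ ν)
    (hPu : ∀ t, 1 ≤ t → ∀ μ ∈ Mu E, P t μ μ = 1)
    (hProw : ∀ t, 1 ≤ t → ∀ μ ∈ Ml E, ∑ ν ∈ Nin E μ, P t μ ν = 1)
    (hPα : ∀ t, 1 ≤ t → ∀ ν μ : Fin K, (ν, μ) ∈ E → α ≤ P t μ ν)

include hα0 hα1 hPzero hPnn hPu hProw hPα in
lemma u_Dset {s : ℕ} (hs : 1 ≤ s) :
    ∀ n x (μ : Fin K), μ ∈ Dset E n → n ≤ x → α ^ n ≤ ufun E P s x μ := by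
  intro n
  induction n with
  | zero =>
      intro x μ hμ _
      have h1 := g_add_u hPzero hPu hProw hs x μ
      have h2 := g_Mu hPzero hPu hs x hμ
      simp only [pow_zero]
      linarith
  | succ n ih =>
      intro x μ hμ hx
      rcases Finset.mem_union.1 hμ with h | h
      · calc α ^ (n + 1) ≤ α ^ n := pow_le_pow_of_le_one hα0.le hα1.le (by omega)
          _ ≤ ufun E P s x μ := ih x μ h (by omega)
      · simp only [Finset.mem_filter, Finset.mem_univ, true_and] at h
        obtain ⟨ν, hν, hedge⟩ := h
        cases x with
        | zero => omega
        | succ y =>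
            rw [u_succ]
            have hterm : α ^ (n + 1) ≤ P (s + y + 1) μ ν * ufun E P s y ν := by
              have h1 : α ≤ P (s + y + 1) μ ν := hPα _ (by omega) ν μ hedge
              have h2 : α ^ n ≤ ufun E P s y ν := ih y ν hν (by omega)
              rw [pow_succ, mul_comm]
              exact mul_le_mul h1 h2 (pow_nonneg hα0.le _) (le_trans hα0.le h1)
            refine le_trans hterm (Finset.single_le_sum (f := fun κ =>
              P (s + y + 1) μ κ * ufun E P s y κ) ?_ (Finset.mem_univ ν))
            intro κ _
            exact mul_nonneg (hPnn _ (by omega) _ _) (u_nonneg hPnn hs y κ)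

include hPzero in
lemma Hm_support {s : ℕ} (hs : 1 ≤ s) :
    ∀ x {w κ : Fin K}, ¬ Relation.ReflTransGen (EdgeRel E) κ w → Hm P s x w κ = 0 := by
  intro x
  induction x with
  | zero =>
      intro w κ h
      rw [Hm_zero, Matrix.one_apply_ne]
      intro he
      exact h (he ▸ Relation.ReflTransGen.refl)
  | succ x ih =>
      intro w κ h
      rw [Hm_succ, Matrix.mul_apply]
      refine Finset.sum_eq_zero fun l _ => ?_
      by_cases hP : (w ∈ Ml E ∧ l ∈ Nin E w) ∨ (w = l ∧ w ∈ Mu E)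
      · rcases hP with ⟨_, hl⟩ | ⟨he, _⟩
        · have hedge : (l, w) ∈ E := by simpa [Nin] using hl
          have : ¬ Relation.ReflTransGen (EdgeRel E) κ l := fun hrt =>
            h (hrt.tail hedge)
          rw [ih this, mul_zero]
        · rw [ih (he ▸ h), mul_zero]
      · rw [hPzero _ (by omega) w l hP, zero_mul]

lemma g_split (s a b : ℕ) (w : Fin K) :
    gfun E P s (a + b) w = ∑ κ, Hm P (s + b) a w κ * gfun E P s b κ := by
  simp only [gfun, Hm_add, Matrix.mul_apply]
  rw [Finset.sum_comm]
  simp [Finset.mul_sum]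

/-- Composing a `Mlc` node backward-reachable from `μ ∈ Ml` puts `μ` in `Mlc`. -/
lemma Mlc_of_reach {w μ : Fin K} (hw : Relation.ReflTransGen (EdgeRel E) w μ)
    (hwc : w ∈ Mlc E) (hμMl : μ ∈ Ml E) : μ ∈ Mlc E := by
  rcases (Relation.reflTransGen_iff_eq_or_transGen.1 hw) with he | htr
  · exact he ▸ hwc
  · rw [mem_Mlc_iff] at hwc ⊢
    refine ⟨hμMl, ?_⟩
    rcases hwc.2 with h | ⟨ν, hν, htr'⟩
    · exact Or.inr ⟨w, h, htr⟩
    · exact Or.inr ⟨ν, hν, htr'.trans htr⟩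

include hα0 hα1 hPzero hPnn hPu hProw hPα in
lemma g_block (hK : 1 ≤ K) {μ : Fin K} (hμMl : μ ∈ Ml E) (hμc : μ ∉ Mlc E)
    {s : ℕ} (hs : 1 ≤ s) {w : Fin K} (hw : Relation.ReflTransGen (EdgeRel E) w μ) :
    gfun E P s (K - 1) w ≤ 1 - α ^ (K - 1) := by
  have hαK : α ^ (K - 1) ≤ 1 := pow_le_one₀ hα0.le hα1.le
  rcases Ml_or_Mu (E := E) w with hwMl | hwMu
  · have hwnc : w ∉ Mlc E := fun hc => hμc (Mlc_of_reach hw hc hμMl)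
    have hwinf : w ∉ MlInf E := fun hi => hwnc (mem_Mlc_iff.2 ⟨hwMl, Or.inl hi⟩)
    have hD := not_MlInf_Dset hK hwMl hwinf
    have hu := u_Dset hα0 hα1 hPzero hPnn hPu hProw hPα hs (K - 1) (K - 1) w hD le_rfl
    have := g_add_u hPzero hPu hProw hs (K - 1) w
    linarith
  · rw [g_Mu hPzero hPu hs _ hwMu]
    linarith

include hα0 hα1 hPzero hPnn hPu hProw hPα in
lemma g_decay (hK2 : 2 ≤ K) {μ : Fin K} (hμMl : μ ∈ Ml E) (hμc : μ ∉ Mlc E) :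
    ∀ j s x, 1 ≤ s → j * (K - 1) ≤ x → ∀ w, Relation.ReflTransGen (EdgeRel E) w μ →
      gfun E P s x w ≤ (1 - α ^ (K - 1)) ^ j := by
  intro j
  induction j with
  | zero =>
      intro s x hs _ w _
      simpa using g_le_one hPzero hPnn hPu hProw hs x w
  | succ j ih =>
      intro s x hs hx w hw
      set m := K - 1 with hm
      have hm1 : 1 ≤ m := by omega
      have hq0 : 0 ≤ 1 - α ^ m := by
        have := pow_le_one₀ hα0.le hα1.le (n := m); linarith
      have haux : j * m + m = (j + 1) * m := by ring
      have hxm : m ≤ x := by omega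
      have hxeq : x = m + (x - m) := by omega
      rw [hxeq, g_split]
      have hbound : ∀ κ : Fin K, Hm P (s + (x - m)) m w κ * gfun E P s (x - m) κ ≤
          (if κ ∈ Ml E then Hm P (s + (x - m)) m w κ * (1 - α ^ m) ^ j else 0) := by
        intro κ
        by_cases hκ : κ ∈ Ml E
        · simp only [hκ, if_true]
          by_cases hrt : Relation.ReflTransGen (EdgeRel E) κ w
          · refine mul_le_mul_of_nonneg_left ?_ (Hm_nonneg hPnn (by omega) m w κ)
            exact ih s (x - m) hs (by omega) κ (hrt.trans hw)
          · rw [Hm_support hPzero (by omega) m hrt, zero_mul, zero_mul]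
        · simp only [hκ, if_false]
          rw [g_Mu hPzero hPu hs _ (not_Ml_iff_Mu.1 hκ), mul_zero]
      calc ∑ κ, Hm P (s + (x - m)) m w κ * gfun E P s (x - m) κ
          ≤ ∑ κ, (if κ ∈ Ml E then Hm P (s + (x - m)) m w κ * (1 - α ^ m) ^ j else 0) :=
            Finset.sum_le_sum fun κ _ => hbound κ
        _ = (∑ κ ∈ Ml E, Hm P (s + (x - m)) m w κ) * (1 - α ^ m) ^ j := by
            rw [Finset.sum_ite_mem, Finset.univ_inter, Finset.sum_mul]
        _ ≤ (1 - α ^ m) * (1 - α ^ m) ^ j := by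
            refine mul_le_mul_of_nonneg_right ?_ (pow_nonneg hq0 j)
            exact g_block hα0 hα1 hPzero hPnn hPu hProw hPα (by omega) hμMl hμc
              (by omega) hw
        _ = (1 - α ^ m) ^ (j + 1) := by rw [pow_succ, mul_comm]

end withP3

lemma sum_pow_div_le {q : ℝ} (hq0 : 0 ≤ q) (hq1 : q < 1) {m : ℕ} (hm : 1 ≤ m) (T : ℕ) :
    ∑ x ∈ Finset.range T, q ^ (x / m) ≤ m / (1 - q) := by
  have hblock : ∀ J : ℕ, ∑ x ∈ Finset.range (m * J), q ^ (x / m)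
      = m * ∑ j ∈ Finset.range J, q ^ j := by
    intro J
    induction J with
    | zero => simp
    | succ J ih =>
        have h1 : m * (J + 1) = m * J + m := by ring
        rw [h1, Finset.range_eq_Ico,
          ← Finset.sum_Ico_consecutive _ (Nat.zero_le (m * J)) (Nat.le_add_right _ _),
          ← Finset.range_eq_Ico, ih, Finset.sum_Ico_eq_sum_range]
        have h2 : ∀ i ∈ Finset.range (m * J + m - m * J), q ^ ((m * J + i) / m) = q ^ J := by
          intro i hi
          have hi' : i < m := by
            have := Finset.mem_range.1 hi; omega
          congr 1
          rw [Nat.mul_add_div (by omega), Nat.div_eq_of_lt hi', Nat.add_zero]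
        rw [Finset.sum_congr rfl h2, Finset.sum_const, Finset.sum_range_succ]
        simp only [Finset.card_range, nsmul_eq_mul]
        push_cast
        ring_nf
        rw [show m + m * J - m * J = m by omega]
        ring
  have hgeom : ∀ J : ℕ, ∑ j ∈ Finset.range J, q ^ j ≤ 1 / (1 - q) := by
    intro J
    have h1q : (0:ℝ) < 1 - q := by linarith
    rw [geom_sum_eq (ne_of_lt hq1)]
    have heq : (q ^ J - 1) / (q - 1) = (1 - q ^ J) / (1 - q) := by
      rw [← neg_div_neg_eq]
      ring_nf
    rw [heq, div_le_div_iff₀ h1q h1q]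
    have hqJ : 0 ≤ q ^ J := pow_nonneg hq0 J
    nlinarith
  have hsub : T ≤ m * (T / m + 1) := by
    have h1 := Nat.div_add_mod T m
    have h2 : T % m < m := Nat.mod_lt _ (by omega)
    have : m * (T / m + 1) = m * (T / m) + m := by ring
    omega
  calc ∑ x ∈ Finset.range T, q ^ (x / m)
      ≤ ∑ x ∈ Finset.range (m * (T / m + 1)), q ^ (x / m) := by
        refine Finset.sum_le_sum_of_subset_of_nonneg ?_ fun x _ _ => pow_nonneg hq0 _
        exact Finset.range_subset_range.2 hsub
    _ = m * ∑ j ∈ Finset.range (T / m + 1), q ^ j := hblock _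
    _ ≤ m * (1 / (1 - q)) := by
        refine mul_le_mul_of_nonneg_left (hgeom _) (by positivity)
    _ = m / (1 - q) := by ring

lemma inner_sum_eq {t T : ℕ} (h2 : t ≤ T) (μ : Fin K) :
    ∑ ν ∈ Ml E, Jmat P T (t + 1) μ ν = gfun E P t (T - t) μ := by
  simp only [gfun, Hm]
  rw [Nat.add_sub_cancel' h2]

end Main

/-- With `S_{T,μ} = ∑_{t=1}^T (∑_{ν∈M_l} J_{T,t+1,μ,ν})²`:
(a) for every `μ ∈ M_l^c` and `T ≥ K`, `S_{T,μ} ≥ (T − K + 1)·α^{2(K−1)}`, and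
`S_{T,μ} → ∞` as `T → ∞`; (b) for every `μ ∉ M_l^c`, `sup_{T≥1} S_{T,μ} < ∞`. -/
theorem stmt18
    {K : ℕ} (hK : 1 ≤ K)
    (E : Finset (Fin K × Fin K))
    (α : ℝ) (hα0 : 0 < α) (hα1 : α < 1)
    (P : ℕ → Matrix (Fin K) (Fin K) ℝ)
    (hPzero : ∀ t, 1 ≤ t → ∀ μ ν : Fin K,
      ¬ ((μ ∈ Ml E ∧ ν ∈ Nin E μ) ∨ (μ = ν ∧ μ ∈ Mu E)) → P t μ ν = 0)
    (hPnn : ∀ t, 1 ≤ t → ∀ μ ν : Fin K, 0 ≤ P t μ ν)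
    (hPu : ∀ t, 1 ≤ t → ∀ μ ∈ Mu E, P t μ μ = 1)
    (hProw : ∀ t, 1 ≤ t → ∀ μ ∈ Ml E, ∑ ν ∈ Nin E μ, P t μ ν = 1)
    (hPα : ∀ t, 1 ≤ t → ∀ ν μ : Fin K, (ν, μ) ∈ E → α ≤ P t μ ν) :
    (∀ μ ∈ Mlc E,
      (∀ T : ℕ, K ≤ T →
        ((T : ℝ) - K + 1) * α ^ (2 * (K - 1)) ≤
          ∑ t ∈ Finset.Icc 1 T, (∑ ν ∈ Ml E, Jmat P T (t + 1) μ ν) ^ 2) ∧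
      Tendsto (fun T : ℕ => ∑ t ∈ Finset.Icc 1 T, (∑ ν ∈ Ml E, Jmat P T (t + 1) μ ν) ^ 2)
        atTop atTop) ∧
    (∀ μ : Fin K, μ ∉ Mlc E →
      ∃ C : ℝ, ∀ T : ℕ, 1 ≤ T →
        ∑ t ∈ Finset.Icc 1 T, (∑ ν ∈ Ml E, Jmat P T (t + 1) μ ν) ^ 2 ≤ C) := by
  have hc : (0:ℝ) < α ^ (2 * (K - 1)) := pow_pos hα0 _
  constructor
  · -- part (a)
    intro μ hμ
    have key : ∀ T : ℕ, 1 ≤ T → (T : ℝ) * α ^ (2 * (K - 1)) ≤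
        ∑ t ∈ Finset.Icc 1 T, (∑ ν ∈ Ml E, Jmat P T (t + 1) μ ν) ^ 2 := by
      intro T hT
      have hterm : ∀ t ∈ Finset.Icc 1 T,
          α ^ (2 * (K - 1)) ≤ (∑ ν ∈ Ml E, Jmat P T (t + 1) μ ν) ^ 2 := by
        intro t ht
        obtain ⟨ht1, ht2⟩ := Finset.mem_Icc.1 ht
        rw [inner_sum_eq ht2]
        have hg := g_Mlc hα0 hα1 hPzero hPnn hPu hProw hPα hK ht1 (T - t) hμ
        have heq : α ^ (2 * (K - 1)) = (α ^ (K - 1)) ^ 2 := by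
          rw [← pow_mul, mul_comm]
        rw [heq]
        exact pow_le_pow_left₀ (pow_nonneg hα0.le _) hg 2
      calc (T : ℝ) * α ^ (2 * (K - 1))
          = (Finset.Icc 1 T).card • (α ^ (2 * (K - 1))) := by
            rw [Nat.card_Icc]
            simp [nsmul_eq_mul]
        _ ≤ ∑ t ∈ Finset.Icc 1 T, (∑ ν ∈ Ml E, Jmat P T (t + 1) μ ν) ^ 2 :=
            Finset.card_nsmul_le_sum _ _ _ hterm
    constructor
    · intro T hT
      refine le_trans ?_ (key T (le_trans hK hT))
      have : ((T : ℝ) - K + 1) ≤ T := by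
        have : (1:ℝ) ≤ K := by exact_mod_cast hK
        linarith
      exact mul_le_mul_of_nonneg_right this hc.le
    · have hL : Tendsto (fun T : ℕ => (T : ℝ) * α ^ (2 * (K - 1))) atTop atTop :=
        tendsto_natCast_atTop_atTop.atTop_mul_const hc
      refine tendsto_atTop_mono' atTop ?_ hL
      filter_upwards [eventually_ge_atTop 1] with T hT
      exact key T hT
  · -- part (b)
    intro μ hμc
    rcases Ml_or_Mu (E := E) μ with hMl | hMu
    · -- μ ∈ Ml \ Mlc
      have hninf : μ ∉ MlInf E := fun hi => hμc (mem_Mlc_iff.2 ⟨hMl, Or.inl hi⟩)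
      have hex : ∃ u ∈ Mu E, Relation.TransGen (EdgeRel E) u μ := by
        rw [mem_MlInf_iff] at hninf
        push_neg at hninf
        exact hninf hMl
      obtain ⟨u, hu, -⟩ := hex
      have hK2 : 2 ≤ K := by
        have hne : u ≠ μ := fun he => not_Ml_and_Mu hMl (he ▸ hu)
        have := Fintype.one_lt_card_iff.2 ⟨u, μ, hne⟩
        simp at this; omega
      set m := K - 1 with hm
      have hm1 : 1 ≤ m := by omega
      set q : ℝ := 1 - α ^ m with hq
      have hαm1 : α ^ m ≤ 1 := pow_le_one₀ hα0.le hα1.le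
      have hαm0 : 0 < α ^ m := pow_pos hα0 m
      have hq0 : 0 ≤ q := by rw [hq]; linarith
      have hq1 : q < 1 := by rw [hq]; linarith
      refine ⟨(m : ℝ) / (1 - q), fun T hT => ?_⟩
      calc ∑ t ∈ Finset.Icc 1 T, (∑ ν ∈ Ml E, Jmat P T (t + 1) μ ν) ^ 2
          ≤ ∑ t ∈ Finset.Icc 1 T, q ^ ((T - t) / m) := by
            refine Finset.sum_le_sum fun t ht => ?_
            obtain ⟨ht1, ht2⟩ := Finset.mem_Icc.1 ht
            rw [inner_sum_eq ht2]
            have hg0 := g_nonneg (E := E) hPnn ht1 (T - t) μ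
            have hg1 := g_le_one hPzero hPnn hPu hProw ht1 (T - t) μ
            have hgq : gfun E P t (T - t) μ ≤ q ^ ((T - t) / m) := by
              refine g_decay hα0 hα1 hPzero hPnn hPu hProw hPα hK2 hMl hμc
                ((T - t) / m) t (T - t) ht1 ?_ μ Relation.ReflTransGen.refl
              exact Nat.div_mul_le_self _ _
            calc gfun E P t (T - t) μ ^ 2 = gfun E P t (T - t) μ * gfun E P t (T - t) μ :=
                  sq (gfun E P t (T - t) μ)
              _ ≤ 1 * q ^ ((T - t) / m) := mul_le_mul hg1 hgq hg0 one_pos.le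
              _ = q ^ ((T - t) / m) := one_mul _
        _ = ∑ x ∈ Finset.range T, q ^ (x / m) := by
            refine Finset.sum_nbij' (fun t => T - t) (fun x => T - x) ?_ ?_ ?_ ?_ ?_
            · intro t ht
              obtain ⟨ht1, ht2⟩ := Finset.mem_Icc.1 ht
              exact Finset.mem_range.2 (by omega)
            · intro x hx
              have := Finset.mem_range.1 hx
              exact Finset.mem_Icc.2 (by omega)
            · intro t ht
              obtain ⟨ht1, ht2⟩ := Finset.mem_Icc.1 ht
              omega
            · intro x hx
              have := Finset.mem_range.1 hx
              omega
            · intro t ht; rfl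
        _ ≤ (m : ℝ) / (1 - q) := sum_pow_div_le hq0 hq1 hm1 T
    · -- μ ∈ Mu
      refine ⟨0, fun T hT => ?_⟩
      have : ∑ t ∈ Finset.Icc 1 T, (∑ ν ∈ Ml E, Jmat P T (t + 1) μ ν) ^ 2 = 0 := by
        refine Finset.sum_eq_zero fun t ht => ?_
        obtain ⟨ht1, ht2⟩ := Finset.mem_Icc.1 ht
        rw [inner_sum_eq ht2, g_Mu hPzero hPu ht1 (T - t) hMu]
        ring
      rw [this]
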